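/- Define σ^{(t)}(r) = sinh(c·t·r)/sinh(c·r) for a constant c > 0 and r > 0. Then the second composition identity holds: σ^{(1-(1-t3)t1 - t3·t2)}(r) = σ^{(1-t3)}((t2-t1)·r) · σ^{(1-t1)}(r) + σ^{(t3)}((t2-t1)·r) · σ^{(1-t2)}(r), for all t1, t2, t3 ∈ [0,1] with t1 < t2. -/

import Mathlib

lemma sinh_key (a u s : ℝ) :
    Real.sinh (u - s * a) * Real.sinh a =
      Real.sinh ((1 - s) * a) * Real.sinh u + Real.sinh (s * a) * Real.sinh (u - a) := by
  simp only [Real.sinh_eq, show (1 - s) * a = a - s * a by ring]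
  simp only [Real.exp_sub, Real.exp_add, Real.exp_neg]
  have h1 := (Real.exp_pos u).ne'
  have h2 := (Real.exp_pos a).ne'
  have h3 := (Real.exp_pos (s * a)).ne'
  field_simp
  ring

theorem sigma_composition_identity_reversed
    (c r t1 t2 t3 : ℝ) (hc : 0 < c) (hr : 0 < r)
    (h1 : t1 ∈ Set.Icc (0:ℝ) 1) (h2 : t2 ∈ Set.Icc (0:ℝ) 1)
    (h3 : t3 ∈ Set.Icc (0:ℝ) 1) (h12 : t1 < t2)
    (σ : ℝ → ℝ → ℝ)
    (hσ : ∀ t s, σ t s = Real.sinh (c * t * s) / Real.sinh (c * s)) :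
    σ (1 - ((1 - t3) * t1 + t3 * t2)) r =
      σ (1 - t3) ((t2 - t1) * r) * σ (1 - t1) r +
        σ t3 ((t2 - t1) * r) * σ (1 - t2) r := by
  have hd : (0:ℝ) < t2 - t1 := by linarith
  have hcr : Real.sinh (c * r) ≠ 0 := (Real.sinh_pos_iff.2 (by positivity)).ne'
  have ha : Real.sinh (c * ((t2 - t1) * r)) ≠ 0 :=
    (Real.sinh_pos_iff.2 (by positivity)).ne'
  simp only [hσ]
  rw [show c * (1 - ((1 - t3) * t1 + t3 * t2)) * r
        = c * (1 - t1) * r - t3 * (c * ((t2 - t1) * r)) by ring,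
      show c * (1 - t3) * ((t2 - t1) * r) = (1 - t3) * (c * ((t2 - t1) * r)) by ring,
      show c * t3 * ((t2 - t1) * r) = t3 * (c * ((t2 - t1) * r)) by ring,
      show c * (1 - t2) * r = c * (1 - t1) * r - c * ((t2 - t1) * r) by ring]
  field_simp
  linear_combination (norm := ring_nf) sinh_key (c * ((t2 - t1) * r)) (c * (1 - t1) * r) t3
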